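/- There is a universal constant C such that for all M > 0 and 0 < x < 1, the number of points of (ℕ/2)³ in the open ball of radius M(1+x)^{1/2} minus the number in the closed ball of radius M(1-x)^{1/2} is at most C(M³x + max(1, M²)). -/

import Mathlib

open MeasureTheory Set

namespace Stmt9Aux

noncomputable def W : ENNReal := volume (Metric.ball (0 : EuclideanSpace ℝ (Fin 3)) 1)

def ballSet (t : ℝ) : Set (Fin 3 → ℝ) := {x | ∑ j, x j ^ 2 < t}

def cube (p : Fin 3 → ℕ) : Set (Fin 3 → ℝ) :=
  Set.univ.pi fun j => Set.Ico ((p j : ℝ) / 2) ((p j : ℝ) / 2 + 1 / 2)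

def A (t : ℝ) : Set (Fin 3 → ℝ) := {x | (∀ j, 0 ≤ x j) ∧ ∑ j, x j ^ 2 < t}

lemma measurableSet_ballSet (t : ℝ) : MeasurableSet (ballSet t) := by
  have : Measurable fun x : Fin 3 → ℝ => ∑ j, x j ^ 2 :=
    Finset.measurable_sum _ fun j _ => (measurable_pi_apply j).pow_const 2
  exact measurableSet_lt this measurable_const

lemma W_ne_top : W ≠ ⊤ := (measure_ball_lt_top).ne

lemma volume_ballSet {t : ℝ} (ht : 0 ≤ t) :
    volume (ballSet t) = ENNReal.ofReal (Real.sqrt t ^ 3) * W := by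
  have hmp := EuclideanSpace.volume_preserving_symm_measurableEquiv_toLp (Fin 3)
  have h1 : (MeasurableEquiv.toLp 2 (Fin 3 → ℝ)).symm ⁻¹' (ballSet t)
      = Metric.ball (0 : EuclideanSpace ℝ (Fin 3)) (Real.sqrt t) := by
    ext y
    simp only [ballSet, Set.mem_preimage, Set.mem_setOf_eq, Metric.mem_ball, dist_zero_right]
    rw [EuclideanSpace.norm_eq]
    have hy : (MeasurableEquiv.toLp 2 (Fin 3 → ℝ)).symm y = fun j => y j := rfl
    rw [hy]
    simp only [Real.norm_eq_abs, sq_abs]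
    exact (Real.sqrt_lt_sqrt_iff (by positivity)).symm
  have h2 := hmp.measure_preimage (measurableSet_ballSet t).nullMeasurableSet
  rw [h1] at h2
  rw [← h2, Measure.addHaar_ball volume 0 (Real.sqrt_nonneg t)]
  rw [finrank_euclideanSpace_fin]
  rfl


lemma measurableSet_cube (p : Fin 3 → ℕ) : MeasurableSet (cube p) :=
  MeasurableSet.univ_pi fun _ => measurableSet_Ico

lemma volume_cube (p : Fin 3 → ℕ) : volume (cube p) = ENNReal.ofReal (1 / 8) := by
  rw [cube, volume_pi_pi]
  have : ∀ j : Fin 3, volume (Set.Ico ((p j : ℝ) / 2) ((p j : ℝ) / 2 + 1 / 2))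
      = ENNReal.ofReal (1 / 2) := by
    intro j; rw [Real.volume_Ico]; norm_num
  simp only [this, Finset.prod_const, Finset.card_univ, Fintype.card_fin]
  rw [← ENNReal.ofReal_pow (by norm_num)]
  norm_num

lemma cube_disjoint {p q : Fin 3 → ℕ} (h : p ≠ q) : Disjoint (cube p) (cube q) := by
  rw [Set.disjoint_left]
  intro x hx hx'
  refine h (funext fun j => ?_)
  have h1 := hx j (Set.mem_univ j)
  have h2 := hx' j (Set.mem_univ j)
  simp only [Set.mem_Ico] at h1 h2
  have hpq : (p j : ℝ) < q j + 1 := by linarith [h1.1, h1.2, h2.1, h2.2]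
  have hqp : (q j : ℝ) < p j + 1 := by linarith [h1.1, h1.2, h2.1, h2.2]
  have hpq' : p j < q j + 1 := by exact_mod_cast hpq
  have hqp' : q j < p j + 1 := by exact_mod_cast hqp
  omega

lemma finite_le (t : ℝ) : {p : Fin 3 → ℕ | ∑ j, (((p j : ℝ) + 1) / 2) ^ 2 ≤ t}.Finite := by
  set K := Nat.floor (2 * Real.sqrt t) with hK
  apply Set.Finite.subset (Set.Finite.pi (fun _ : Fin 3 => Set.finite_Iic K))
  intro p hp
  simp only [Set.mem_setOf_eq] at hp
  intro j _
  simp only [Set.mem_Iic]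
  have hterm : (((p j : ℝ) + 1) / 2) ^ 2 ≤ t := by
    refine le_trans ?_ hp
    exact Finset.single_le_sum (f := fun j => (((p j : ℝ) + 1) / 2) ^ 2)
      (fun i _ => by positivity) (Finset.mem_univ j)
  have h2 : ((p j : ℝ) + 1) / 2 ≤ Real.sqrt t :=
    Real.le_sqrt_of_sq_le hterm
  have h3 : (p j : ℝ) ≤ 2 * Real.sqrt t := by linarith
  exact Nat.le_floor h3

lemma finite_lt (t : ℝ) : {p : Fin 3 → ℕ | ∑ j, (((p j : ℝ) + 1) / 2) ^ 2 < t}.Finite :=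
  (finite_le t).subset (Set.setOf_subset_setOf.mpr fun p => le_of_lt)

lemma le_sqrt_of_sq_le' : True := trivial

lemma claim1 (t : ℝ) :
    ((finite_lt t).toFinset.card : ENNReal) * ENNReal.ofReal (1 / 8) ≤ volume (A t) := by
  set F := (finite_lt t).toFinset with hF
  have hdisj : (↑F : Set (Fin 3 → ℕ)).PairwiseDisjoint cube :=
    fun p _ q _ h => cube_disjoint h
  have hmeas : ∀ p ∈ F, MeasurableSet (cube p) := fun p _ => measurableSet_cube p
  have hsum := measure_biUnion_finset hdisj hmeas (μ := volume)
  have hsub : (⋃ p ∈ F, cube p) ⊆ A t := by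
    intro x hx
    simp only [Set.mem_iUnion] at hx
    obtain ⟨p, hpF, hxp⟩ := hx
    have hp : ∑ j, (((p j : ℝ) + 1) / 2) ^ 2 < t := by
      have := (Set.Finite.mem_toFinset _).mp hpF
      exact this
    constructor
    · intro j
      have := hxp j (Set.mem_univ j)
      simp only [Set.mem_Ico] at this
      have : (0 : ℝ) ≤ (p j : ℝ) / 2 := by positivity
      linarith [(hxp j (Set.mem_univ j)).1]
    · refine lt_of_le_of_lt ?_ hp
      apply Finset.sum_le_sum
      intro j _
      have hj := hxp j (Set.mem_univ j)
      simp only [Set.mem_Ico] at hj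
      have h0 : (0 : ℝ) ≤ x j := le_trans (by positivity) hj.1
      have h1 : x j ≤ ((p j : ℝ) + 1) / 2 := by linarith [hj.2]
      exact pow_le_pow_left₀ h0 h1 2
  calc ((F.card : ENNReal)) * ENNReal.ofReal (1 / 8)
      = ∑ _p ∈ F, ENNReal.ofReal (1 / 8) := by
        rw [Finset.sum_const, nsmul_eq_mul]
    _ = ∑ p ∈ F, volume (cube p) :=
        Finset.sum_congr rfl fun p _ => (volume_cube p).symm
    _ = volume (⋃ p ∈ F, cube p) := hsum.symm
    _ ≤ volume (A t) := measure_mono hsub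


lemma claim2 {u tgt : ℝ} (hu : 0 ≤ u)
    (h : (Real.sqrt u + Real.sqrt 3 / 2) ^ 2 ≤ tgt) :
    volume (A u) ≤ ((finite_le tgt).toFinset.card : ENNReal) * ENNReal.ofReal (1 / 8) := by
  set F := (finite_le tgt).toFinset with hF
  have hsub : A u ⊆ ⋃ p ∈ F, cube p := by
    rintro x ⟨hx0, hxs⟩
    set p : Fin 3 → ℕ := fun j => Nat.floor (2 * x j) with hp
    have hfl : ∀ j, ((p j : ℝ)) ≤ 2 * x j := fun j => Nat.floor_le (by linarith [hx0 j])
    have hfl2 : ∀ j, 2 * x j < (p j : ℝ) + 1 := fun j => Nat.lt_floor_add_one _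
    have hxc : x ∈ cube p := by
      intro j _
      simp only [Set.mem_Ico]
      constructor
      · linarith [hfl j]
      · linarith [hfl2 j]
    have hpF : p ∈ F := by
      rw [hF, Set.Finite.mem_toFinset]
      show ∑ j, (((p j : ℝ) + 1) / 2) ^ 2 ≤ tgt
      have hterm : ∀ j, (((p j : ℝ) + 1) / 2) ^ 2 ≤ (x j + 1 / 2) ^ 2 := by
        intro j
        exact pow_le_pow_left₀ (by positivity) (by linarith [hfl j]) 2
      have hsum1 : ∑ j, (((p j : ℝ) + 1) / 2) ^ 2 ≤ ∑ j, (x j + 1 / 2) ^ 2 :=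
        Finset.sum_le_sum fun j _ => hterm j
      have hL : (x 0 + x 1 + x 2) ≤ Real.sqrt 3 * Real.sqrt u := by
        rw [← Real.sqrt_mul (by norm_num : (0:ℝ) ≤ 3)]
        refine Real.le_sqrt_of_sq_le ?_
        have hxs' : x 0 ^ 2 + x 1 ^ 2 + x 2 ^ 2 < u := by
          have := hxs; rwa [Fin.sum_univ_three] at this
        nlinarith [sq_nonneg (x 0 - x 1), sq_nonneg (x 0 - x 2), sq_nonneg (x 1 - x 2)]
      have hxs' : x 0 ^ 2 + x 1 ^ 2 + x 2 ^ 2 < u := by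
        have := hxs; rwa [Fin.sum_univ_three] at this
      have hsq3 : Real.sqrt 3 ^ 2 = 3 := Real.sq_sqrt (by norm_num)
      have hsqu : Real.sqrt u ^ 2 = u := Real.sq_sqrt hu
      have hexp : ∑ j, (x j + 1 / 2) ^ 2
          = (x 0 ^ 2 + x 1 ^ 2 + x 2 ^ 2) + (x 0 + x 1 + x 2) + 3 / 4 := by
        rw [Fin.sum_univ_three]; ring
      rw [hexp] at hsum1
      nlinarith [hsum1, hL, hxs']
    exact Set.mem_iUnion.mpr ⟨p, Set.mem_iUnion.mpr ⟨hpF, hxc⟩⟩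
  calc volume (A u) ≤ volume (⋃ p ∈ F, cube p) := measure_mono hsub
    _ ≤ ∑ p ∈ F, volume (cube p) := measure_biUnion_finset_le F cube
    _ = (F.card : ENNReal) * ENNReal.ofReal (1 / 8) := by
        simp only [volume_cube, Finset.sum_const, nsmul_eq_mul]


lemma W_le : W ≤ ENNReal.ofReal 8 := by
  have h1 : volume (ballSet 1) = W := by
    rw [volume_ballSet zero_le_one, Real.sqrt_one, one_pow, ENNReal.ofReal_one, one_mul]
  rw [← h1]
  have hsub : ballSet 1 ⊆ Set.univ.pi fun _ : Fin 3 => Set.Icc (-1 : ℝ) 1 := by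
    intro x hx j _
    have hterm : x j ^ 2 ≤ ∑ i, x i ^ 2 :=
      Finset.single_le_sum (fun i _ => sq_nonneg (x i)) (Finset.mem_univ j)
    have hlt : x j ^ 2 < 1 := lt_of_le_of_lt hterm hx
    constructor <;> nlinarith
  refine le_trans (measure_mono hsub) ?_
  rw [volume_pi_pi]
  have h2 : volume (Set.Icc (-1 : ℝ) 1) = ENNReal.ofReal 2 := by
    rw [Real.volume_Icc]; norm_num
  simp only [h2, Finset.prod_const, Finset.card_univ, Fintype.card_fin]
  rw [← ENNReal.ofReal_pow (by norm_num)]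
  norm_num

lemma main_count {M x : ℝ} (hM : 0 < M) (hx0 : 0 < x) (hx1 : x < 1) :
    ((finite_lt (M ^ 2 * (1 + x))).toFinset.card : ℝ)
      ≤ ((finite_le (M ^ 2 * (1 - x))).toFinset.card : ℝ)
        + 64 * (Real.sqrt (M ^ 2 * (1 + x)) ^ 3
            - max (M * Real.sqrt (1 - x) - Real.sqrt 3 / 2) 0 ^ 3) := by
  set t₁ : ℝ := M ^ 2 * (1 + x) with ht₁def
  have ht₁ : 0 ≤ t₁ := by nlinarith
  set m : ℝ := max (M * Real.sqrt (1 - x) - Real.sqrt 3 / 2) 0 with hmdef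
  have hm0 : 0 ≤ m := le_max_right _ _
  set u : ℝ := m ^ 2 with hudef
  have hu : 0 ≤ u := sq_nonneg m
  have hsqu : Real.sqrt u = m := Real.sqrt_sq hm0
  have hsm : Real.sqrt (1 - x) ^ 2 = 1 - x := Real.sq_sqrt (by linarith)
  have hsmn : 0 ≤ Real.sqrt (1 - x) := Real.sqrt_nonneg _
  have hmle : m ≤ M * Real.sqrt (1 - x) := by
    apply max_le
    · linarith [Real.sqrt_nonneg 3]
    · positivity
  have hut₁ : u ≤ t₁ := by
    have h1 : u ≤ (M * Real.sqrt (1 - x)) ^ 2 := pow_le_pow_left₀ hm0 hmle 2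
    have h2 : (M * Real.sqrt (1 - x)) ^ 2 = M ^ 2 * (1 - x) := by
      rw [mul_pow, hsm]
    nlinarith
  set N₁ := (finite_lt t₁).toFinset.card with hN₁
  set N₂ := (finite_le (M ^ 2 * (1 - x))).toFinset.card with hN₂
  -- lower bound on volume of A t₁
  have h1 := claim1 t₁
  -- upper bound on volume of A u
  have h2 : volume (A u) ≤ (N₂ : ENNReal) * ENNReal.ofReal (1 / 8) := by
    rcases le_or_gt (Real.sqrt 3 / 2) (M * Real.sqrt (1 - x)) with hca | hca
    · refine claim2 hu ?_
      rw [hsqu, hmdef, max_eq_left (by linarith)]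
      have : M * Real.sqrt (1 - x) - Real.sqrt 3 / 2 + Real.sqrt 3 / 2
          = M * Real.sqrt (1 - x) := by ring
      rw [this, mul_pow, hsm]
    · have hmz : m = 0 := max_eq_right (by linarith)
      have : A u = ∅ := by
        rw [Set.eq_empty_iff_forall_notMem]
        rintro y ⟨hy0, hys⟩
        have : (0 : ℝ) ≤ ∑ j, y j ^ 2 := by positivity
        rw [hudef, hmz] at hys
        nlinarith
      rw [this]
      simp
  -- splitting
  have hsplit : A t₁ ⊆ A u ∪ (ballSet t₁ \ ballSet u) := by
    rintro y ⟨hy0, hys⟩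
    by_cases hyu : ∑ j, y j ^ 2 < u
    · exact Or.inl ⟨hy0, hyu⟩
    · exact Or.inr ⟨hys, fun hc => hyu hc⟩
  have hvol_u_ne : volume (ballSet u) ≠ ⊤ := by
    rw [volume_ballSet hu]
    exact ENNReal.mul_ne_top ENNReal.ofReal_ne_top W_ne_top
  have hDeq : volume (ballSet t₁ \ ballSet u)
      = ENNReal.ofReal (Real.sqrt t₁ ^ 3) * W - ENNReal.ofReal (Real.sqrt u ^ 3) * W := by
    have hbsub : ballSet u ⊆ ballSet t₁ := fun y hy => lt_of_lt_of_le hy hut₁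
    rw [measure_diff hbsub (measurableSet_ballSet u).nullMeasurableSet hvol_u_ne,
      volume_ballSet ht₁, volume_ballSet hu]
  have hDle : volume (ballSet t₁ \ ballSet u)
      ≤ ENNReal.ofReal (8 * (Real.sqrt t₁ ^ 3 - m ^ 3)) := by
    rw [hDeq, hsqu, ← ENNReal.sub_mul (fun _ _ => W_ne_top),
      ← ENNReal.ofReal_sub _ (by positivity)]
    have hΔ : 0 ≤ Real.sqrt t₁ ^ 3 - m ^ 3 := by
      have : m ≤ Real.sqrt t₁ := by
        rw [← hsqu]; exact Real.sqrt_le_sqrt hut₁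
      have := pow_le_pow_left₀ hm0 this 3
      linarith
    calc ENNReal.ofReal (Real.sqrt t₁ ^ 3 - m ^ 3) * W
        ≤ ENNReal.ofReal (Real.sqrt t₁ ^ 3 - m ^ 3) * ENNReal.ofReal 8 :=
          mul_le_mul_right W_le _
      _ = ENNReal.ofReal (8 * (Real.sqrt t₁ ^ 3 - m ^ 3)) := by
          rw [← ENNReal.ofReal_mul hΔ, mul_comm]
  have hchain : (N₁ : ENNReal) * ENNReal.ofReal (1 / 8)
      ≤ (N₂ : ENNReal) * ENNReal.ofReal (1 / 8)
        + ENNReal.ofReal (8 * (Real.sqrt t₁ ^ 3 - m ^ 3)) := by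
    refine le_trans h1 ?_
    refine le_trans (measure_mono hsplit) ?_
    refine le_trans (measure_union_le _ _) ?_
    exact add_le_add h2 hDle
  -- convert to real
  have hRHSne : (N₂ : ENNReal) * ENNReal.ofReal (1 / 8)
      + ENNReal.ofReal (8 * (Real.sqrt t₁ ^ 3 - m ^ 3)) ≠ ⊤ := by
    refine ENNReal.add_ne_top.mpr ⟨?_, ENNReal.ofReal_ne_top⟩
    exact ENNReal.mul_ne_top (ENNReal.natCast_ne_top _) ENNReal.ofReal_ne_top
  have hreal := ENNReal.toReal_mono hRHSne hchain
  rw [ENNReal.toReal_add (ENNReal.mul_ne_top (ENNReal.natCast_ne_top _) ENNReal.ofReal_ne_top)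
    ENNReal.ofReal_ne_top, ENNReal.toReal_mul, ENNReal.toReal_mul,
    ENNReal.toReal_natCast, ENNReal.toReal_natCast,
    ENNReal.toReal_ofReal (by norm_num : (0:ℝ) ≤ 1/8)] at hreal
  have hΔ0 : 0 ≤ Real.sqrt t₁ ^ 3 - m ^ 3 := by
    have : m ≤ Real.sqrt t₁ := by
      rw [← hsqu]; exact Real.sqrt_le_sqrt hut₁
    have := pow_le_pow_left₀ hm0 this 3
    linarith
  rw [ENNReal.toReal_ofReal (by positivity)] at hreal
  linarith

set_option maxHeartbeats 1000000 in
lemma key_arith {M x : ℝ} (hM : 0 < M) (hx0 : 0 < x) (hx1 : x < 1) :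
    (M * Real.sqrt (1 + x)) ^ 3 - max (M * Real.sqrt (1 - x) - Real.sqrt 3 / 2) 0 ^ 3
      ≤ 5 * (M ^ 3 * x + max 1 (M ^ 2)) := by
  set sp : ℝ := Real.sqrt (1 + x) with hspdef
  set sm : ℝ := Real.sqrt (1 - x) with hsmdef
  have hsp2 : sp ^ 2 = 1 + x := Real.sq_sqrt (by linarith)
  have hsm2 : sm ^ 2 = 1 - x := Real.sq_sqrt (by linarith)
  have hsp0 : 0 ≤ sp := Real.sqrt_nonneg _
  have hsm0 : 0 ≤ sm := Real.sqrt_nonneg _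
  have hsp1 : 1 ≤ sp := by nlinarith
  have hsm1 : sm ≤ 1 := by nlinarith
  have hsmge : 1 - x ≤ sm := by nlinarith
  have ha2 : Real.sqrt 3 ^ 2 = 3 := Real.sq_sqrt (by norm_num)
  have ha0 : 0 ≤ Real.sqrt 3 := Real.sqrt_nonneg _
  have ha1 : Real.sqrt 3 ≤ 2 := by nlinarith
  have hsple : sp ≤ 1 + x := by nlinarith
  have hsp3 : sp ^ 3 ≤ 1 + 3 * x := by nlinarith
  have hmaxM : M ^ 2 ≤ max 1 (M ^ 2) := le_max_right _ _
  have hmax1 : (1 : ℝ) ≤ max 1 (M ^ 2) := le_max_left _ _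
  show (M * sp) ^ 3 - max (M * sm - Real.sqrt 3 / 2) 0 ^ 3
      ≤ 5 * (M ^ 3 * x + max 1 (M ^ 2))
  rcases le_or_gt (Real.sqrt 3 / 2) (M * sm) with hc | hc
  · rw [max_eq_left (by linarith)]
    set r : ℝ := M * sm with hrdef
    set b : ℝ := Real.sqrt 3 / 2 with hbdef
    have hb0 : 0 ≤ b := by positivity
    have hb1 : b ≤ 1 := by rw [hbdef]; linarith
    have hrb : b ≤ r := hc
    have hcube : (r - b) ^ 3 = r ^ 3 - 3 * r ^ 2 * b + b ^ 2 * (3 * r - b) := by ring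
    have hpos : 0 ≤ b ^ 2 * (3 * r - b) := by
      apply mul_nonneg (sq_nonneg b); linarith
    have hB : r ^ 3 - 3 * r ^ 2 * b ≤ (r - b) ^ 3 := by rw [hcube]; linarith
    have hr2 : r ^ 2 = M ^ 2 * (1 - x) := by rw [hrdef, mul_pow, hsm2]
    have hr3 : M ^ 3 * (1 - 2 * x) ≤ r ^ 3 := by
      have hsm3e : sm ^ 3 = sm * (1 - x) := by rw [← hsm2]; ring
      have hsm3 : (1 - x) * (1 - x) ≤ sm * (1 - x) :=
        mul_le_mul_of_nonneg_right hsmge (by linarith)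
      have hsm3' : 1 - 2 * x ≤ sm ^ 3 := by rw [hsm3e]; nlinarith [sq_nonneg x]
      have hre : r ^ 3 = M ^ 3 * sm ^ 3 := by rw [hrdef]; ring
      have := mul_le_mul_of_nonneg_left hsm3' (pow_pos hM 3).le
      linarith [hre ▸ this]
    have hA : (M * sp) ^ 3 ≤ M ^ 3 * (1 + 3 * x) := by
      have he : (M * sp) ^ 3 = M ^ 3 * sp ^ 3 := by ring
      have := mul_le_mul_of_nonneg_left hsp3 (pow_pos hM 3).le
      linarith [he ▸ this]
    have h3r2b : 3 * r ^ 2 * b ≤ 3 * M ^ 2 := by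
      rw [hr2]
      have h1 : (1 - x) * b ≤ 1 := by nlinarith
      have := mul_le_mul_of_nonneg_left h1 (sq_nonneg M)
      nlinarith
    linarith only [hA, hB, hr3, h3r2b, hmaxM, hmax1,
      (mul_pos (pow_pos hM 3) hx0 : 0 < M ^ 3 * x)]
  · rw [max_eq_right (by linarith)]
    have hA : (M * sp) ^ 3 ≤ M ^ 3 * (1 + 3 * x) := by
      have he : (M * sp) ^ 3 = M ^ 3 * sp ^ 3 := by ring
      have := mul_le_mul_of_nonneg_left hsp3 (pow_pos hM 3).le
      linarith [he ▸ this]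
    have hM3 : M ^ 3 * (1 - x) ≤ (3 / 4) * M := by
      have h1 : M ^ 2 * (1 - x) < 3 / 4 := by
        have h2 := mul_lt_mul'' hc hc (by positivity) (by positivity)
        nlinarith
      nlinarith [mul_le_mul_of_nonneg_left h1.le hM.le]
    have hMmax : M ≤ max 1 (M ^ 2) := by
      rcases le_total M 1 with h' | h'
      · linarith
      · nlinarith
    have h03 : (0 : ℝ) ^ 3 = 0 := by norm_num
    rw [h03]
    linarith only [hA, hM3, hMmax, hmax1,
      (mul_pos (pow_pos hM 3) hx0 : 0 < M ^ 3 * x)]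

end Stmt9Aux


/-- There is a universal constant `C` such that for all `M > 0` and `0 < x < 1`, the number of
half-integer lattice points of the positive octant in the open ball of radius `M(1+x)^{1/2}`
minus the number in the closed ball of radius `M(1-x)^{1/2}` is at most
`C(M³x + max(1, M²))`. -/
theorem stmt9 : ∃ C > (0 : ℝ), ∀ M x : ℝ, 0 < M → 0 < x → x < 1 →
    (Nat.card {p : Fin 3 → ℕ // ∑ j, (((p j : ℝ) + 1) / 2) ^ 2 < M ^ 2 * (1 + x)} : ℝ) -
        (Nat.card {p : Fin 3 → ℕ // ∑ j, (((p j : ℝ) + 1) / 2) ^ 2 ≤ M ^ 2 * (1 - x)} : ℝ) ≤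
      C * (M ^ 3 * x + max 1 (M ^ 2)) := by
  refine ⟨320, by norm_num, ?_⟩
  intro M x hM hx0 hx1
  have hcard1 : Nat.card {p : Fin 3 → ℕ // ∑ j, (((p j : ℝ) + 1) / 2) ^ 2 < M ^ 2 * (1 + x)}
      = (Stmt9Aux.finite_lt (M ^ 2 * (1 + x))).toFinset.card := by
    exact (Nat.card_coe_set_eq _).trans (Set.ncard_eq_toFinset_card _ (Stmt9Aux.finite_lt _))
  have hcard2 : Nat.card {p : Fin 3 → ℕ // ∑ j, (((p j : ℝ) + 1) / 2) ^ 2 ≤ M ^ 2 * (1 - x)}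
      = (Stmt9Aux.finite_le (M ^ 2 * (1 - x))).toFinset.card := by
    exact (Nat.card_coe_set_eq _).trans (Set.ncard_eq_toFinset_card _ (Stmt9Aux.finite_le _))
  rw [hcard1, hcard2]
  have hmain := Stmt9Aux.main_count hM hx0 hx1
  have hsqt : Real.sqrt (M ^ 2 * (1 + x)) = M * Real.sqrt (1 + x) := by
    rw [Real.sqrt_mul (sq_nonneg M), Real.sqrt_sq hM.le]
  rw [hsqt] at hmain
  have hkey := Stmt9Aux.key_arith hM hx0 hx1
  push_cast
  linarith [hmain, hkey]
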